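/- Let T ≥ 1 be a natural number, N > 0, 0 ≤ γ < 1, Ẽ ≥ 0 and Ew ≥ 0 with Ẽ + Ew > 0, and let b = ⌈log₂(T+1)⌉ and F(λ) = (b·λ + Ew)/(Ẽ + Ew). With the worst-case SNN spike rate s_r = 1-γ, the sparse SNN data-movement energy Ẽ_SNN = N·T·s_r·(Ẽ + Ew) is at most the sparse QNN data-movement energy Ẽ_QNN = N·(1-γ)·(b·Ẽ + Ew) if and only if T ≤ F(Ẽ). -/
import Mathlib


/-- Worst-case spike rate s_r = 1-γ: the sparse SNN data-movement
energy is at most the sparse QNN data-movement energy iff T ≤ F(Ẽ). -/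
theorem snn_data_worst_vs_sparse_qnn
    (T : ℕ) (hT : 1 ≤ T)
    (N γ Esparse Ew s_r : ℝ)
    (hN : 0 < N) (hγ0 : 0 ≤ γ) (hγ1 : γ < 1)
    (hEs : 0 ≤ Esparse) (hEw : 0 ≤ Ew)
    (hpos : 0 < Esparse + Ew)
    (F : ℝ → ℝ)
    (hF : ∀ lam, F lam = (((Nat.clog 2 (T + 1) : ℕ) : ℝ) * lam + Ew) / (Esparse + Ew))
    (hs : s_r = 1 - γ) :
    N * (T : ℝ) * s_r * (Esparse + Ew) ≤
        N * (1 - γ) * (((Nat.clog 2 (T + 1) : ℕ) : ℝ) * Esparse + Ew) ↔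
      (T : ℝ) ≤ F Esparse := by
  subst hs
  rw [hF, le_div_iff₀ hpos]
  set b : ℝ := ((Nat.clog 2 (T + 1) : ℕ) : ℝ)
  have hpos2 : 0 < N * (1 - γ) := mul_pos hN (by linarith)
  constructor
  · intro h
    nlinarith
  · intro h
    nlinarith
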